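/- For any positional marked pattern τ of length k with underlined position ℓ and underlined value τ_ℓ, and any n ≥ k, the number of permutations σ ∈ S_n with pmp_τ(σ) = n-k+1 equals (n-k+1)!. -/

import Mathlib

/-- `σ` has a `τ`-match (with marked position `ℓ`) at position `i`. -/
def HasPMPMatch {k n : ℕ} (τ : Equiv.Perm (Fin k)) (ℓ : Fin k)
    (σ : Equiv.Perm (Fin n)) (i : Fin n) : Prop :=
  ∃ f : Fin k → Fin n, StrictMono f ∧ f ℓ = i ∧
    ∀ a b : Fin k, σ (f a) < σ (f b) ↔ τ a < τ b

/-- The number of positions at which `σ` has a `τ`-match. -/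
noncomputable def pmpCount {k n : ℕ} (τ : Equiv.Perm (Fin k)) (ℓ : Fin k)
    (σ : Equiv.Perm (Fin n)) : ℕ :=
  Nat.card {i : Fin n // HasPMPMatch τ ℓ σ i}

namespace PMPaux

/-- A strictly monotone self-map of a finite set of naturals is the identity. -/
lemma uniqStrict (s : Finset ℕ) (h : ℕ → ℕ)
    (hmaps : ∀ x ∈ s, h x ∈ s)
    (hmono : ∀ x ∈ s, ∀ y ∈ s, x < y → h x < h y) :
    ∀ x ∈ s, h x = x := by
  have hinj : ∀ x ∈ s, ∀ y ∈ s, h x = h y → x = y := by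
    intro x hx y hy hxy
    rcases lt_trichotomy x y with hl | he | hg
    · exact absurd hxy (Nat.ne_of_lt (hmono x hx y hy hl))
    · exact he
    · exact absurd hxy.symm (Nat.ne_of_lt (hmono y hy x hx hg))
  have hsurj : ∀ y ∈ s, ∃ x ∈ s, h x = y := by
    have := Finset.surj_on_of_inj_on_of_card_le (s := s) (t := s) (fun x _ => h x)
      (fun a ha => hmaps a ha) (fun a₁ a₂ ha₁ ha₂ hh => hinj a₁ ha₁ a₂ ha₂ hh) le_rfl
    intro y hy
    obtain ⟨x, hx, hxy⟩ := this y hy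
    exact ⟨x, hx, hxy.symm⟩
  intro x
  induction x using Nat.strong_induction_on with
  | _ x IH =>
    intro hx
    rcases lt_trichotomy (h x) x with hl | he | hg
    · have h1 : h (h x) = h x := IH (h x) hl (hmaps x hx)
      have := hinj (h x) (hmaps x hx) x hx h1
      omega
    · exact he
    · obtain ⟨y, hy, hyx⟩ := hsurj x hx
      rcases lt_trichotomy y x with hl' | he' | hg'
      · have := IH y hl' hy; omega
      · subst he'; omega
      · have := hmono x hx y hy hg'; omega

lemma smG {n k : ℕ} {f : Fin k → Fin n} (hf : StrictMono f) :
    ∀ (d : ℕ) (a b : Fin k), (b : ℕ) = (a : ℕ) + d → (f a : ℕ) + d ≤ (f b : ℕ) := by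
  intro d
  induction d with
  | zero =>
    intro a b hb
    have : a = b := Fin.ext (by omega)
    subst this; omega
  | succ d IH =>
    intro a b hb
    have hlt : (a : ℕ) + d < k := by have := b.isLt; omega
    have h1 := IH a ⟨(a : ℕ) + d, hlt⟩ rfl
    have h2 : f ⟨(a : ℕ) + d, hlt⟩ < f b := hf (by rw [Fin.lt_def]; simp; omega)
    rw [Fin.lt_def] at h2
    omega

lemma sm_le {n k : ℕ} {f : Fin k → Fin n} (hf : StrictMono f) (a : Fin k) :
    (a : ℕ) ≤ (f a : ℕ) := by
  have := smG hf (a : ℕ) ⟨0, a.pos⟩ a (by simp)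
  omega

lemma sm_ub {n k : ℕ} (hkn : k ≤ n) {f : Fin k → Fin n} (hf : StrictMono f) (a : Fin k) :
    (f a : ℕ) ≤ n - k + (a : ℕ) := by
  have hk : 0 < k := a.pos
  have hlast : ((⟨k - 1, by omega⟩ : Fin k) : ℕ) = k - 1 := rfl
  have h1 := smG hf (k - 1 - (a : ℕ)) a ⟨k - 1, by omega⟩ (by have := a.isLt; simp [hlast]; omega)
  have h2 := (f (⟨k - 1, by omega⟩ : Fin k)).isLt
  have := a.isLt
  omega


section Main

variable {n k : ℕ}

/-- The frame position associated to index `j` of the pattern. -/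
def posn (hkn : k ≤ n) (ℓ : Fin k) (j : Fin k) : Fin n :=
  if (j : ℕ) < (ℓ : ℕ) then ⟨j, lt_of_lt_of_le j.isLt hkn⟩
  else ⟨n - k + j, by have := j.isLt; omega⟩

/-- The frame value associated to index `j` of the pattern. -/
def gval (hkn : k ≤ n) (τ : Equiv.Perm (Fin k)) (ℓ : Fin k) (j : Fin k) : Fin n :=
  if (τ j : ℕ) < (τ ℓ : ℕ) then ⟨τ j, lt_of_lt_of_le (τ j).isLt hkn⟩
  else ⟨n - k + τ j, by have := (τ j).isLt; omega⟩

def FrameOK (hkn : k ≤ n) (τ : Equiv.Perm (Fin k)) (ℓ : Fin k) (σ : Equiv.Perm (Fin n)) : Prop :=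
  ∀ j : Fin k, j ≠ ℓ → σ (posn hkn ℓ j) = gval hkn τ ℓ j

lemma posn_lt (hkn : k ≤ n) (ℓ : Fin k) (j : Fin k) (hj : (j : ℕ) < (ℓ : ℕ)) : (posn hkn ℓ j : ℕ) = (j : ℕ) := by
  simp [posn, hj]

lemma posn_ge (hkn : k ≤ n) (ℓ : Fin k) (j : Fin k) (hj : ¬ (j : ℕ) < (ℓ : ℕ)) : (posn hkn ℓ j : ℕ) = n - k + (j : ℕ) := by
  simp [posn, hj]

lemma match_bounds (hkn : k ≤ n) (τ : Equiv.Perm (Fin k)) (ℓ : Fin k) {σ : Equiv.Perm (Fin n)} {i : Fin n} (h : HasPMPMatch τ ℓ σ i) :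
    (ℓ : ℕ) ≤ (i : ℕ) ∧ (i : ℕ) ≤ n - k + (ℓ : ℕ) := by
  obtain ⟨f, hf, hfl, -⟩ := h
  have h1 := sm_le hf ℓ
  have h2 := sm_ub hkn hf ℓ
  rw [hfl] at h1 h2
  exact ⟨h1, h2⟩

lemma lowFin_lt (hkn : k ≤ n) (ℓ : Fin k) : (ℓ : ℕ) < n := lt_of_lt_of_le ℓ.isLt hkn

lemma hiFin_lt (hkn : k ≤ n) (ℓ : Fin k) : n - k + (ℓ : ℕ) < n := by have := ℓ.isLt; omega

/-- The window of possible match positions. -/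
def WF (hkn : k ≤ n) (ℓ : Fin k) : Finset (Fin n) :=
  Finset.Icc ⟨(ℓ : ℕ), lowFin_lt hkn ℓ⟩ ⟨n - k + (ℓ : ℕ), hiFin_lt hkn ℓ⟩

lemma mem_WF (hkn : k ≤ n) (ℓ : Fin k) {i : Fin n} :
    i ∈ WF hkn ℓ ↔ (ℓ : ℕ) ≤ (i : ℕ) ∧ (i : ℕ) ≤ n - k + (ℓ : ℕ) := by
  simp [WF, Finset.mem_Icc, Fin.le_def]

lemma card_WF (hkn : k ≤ n) (ℓ : Fin k) : (WF hkn ℓ).card = n - k + 1 := by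
  rw [WF, Fin.card_Icc]
  have := ℓ.isLt
  simp
  omega

lemma pmpCount_eq_card (σ : Equiv.Perm (Fin n)) [DecidablePred (HasPMPMatch τ ℓ σ)] :
    pmpCount τ ℓ σ = (Finset.univ.filter (HasPMPMatch τ ℓ σ)).card := by
  rw [pmpCount, Nat.card_eq_fintype_card, Fintype.card_subtype]

lemma pmp_eq_iff (hkn : k ≤ n) (τ : Equiv.Perm (Fin k)) (ℓ : Fin k) (σ : Equiv.Perm (Fin n)) :
    pmpCount τ ℓ σ = n - k + 1 ↔
      ∀ i : Fin n, (ℓ : ℕ) ≤ (i : ℕ) → (i : ℕ) ≤ n - k + (ℓ : ℕ) → HasPMPMatch τ ℓ σ i := by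
  classical
  rw [pmpCount_eq_card]
  have hsub : Finset.univ.filter (HasPMPMatch τ ℓ σ) ⊆ WF hkn ℓ := by
    intro i hi
    rw [Finset.mem_filter] at hi
    exact (mem_WF hkn ℓ).2 (match_bounds hkn τ ℓ hi.2)
  constructor
  · intro h i h1 h2
    have hcard : (WF hkn ℓ).card ≤ (Finset.univ.filter (HasPMPMatch τ ℓ σ)).card := by
      rw [card_WF, h]
    have heq := Finset.eq_of_subset_of_card_le hsub hcard
    have : i ∈ Finset.univ.filter (HasPMPMatch τ ℓ σ) := by
      rw [heq, mem_WF]; exact ⟨h1, h2⟩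
    exact (Finset.mem_filter.1 this).2
  · intro h
    have hsub2 : WF hkn ℓ ⊆ Finset.univ.filter (HasPMPMatch τ ℓ σ) := by
      intro i hi
      rw [mem_WF] at hi
      exact Finset.mem_filter.2 ⟨Finset.mem_univ _, h i hi.1 hi.2⟩
    rw [Finset.Subset.antisymm hsub hsub2, card_WF]

lemma middle_of_match (hkn : k ≤ n) (τ : Equiv.Perm (Fin k)) (ℓ : Fin k) {σ : Equiv.Perm (Fin n)} {i : Fin n} (h : HasPMPMatch τ ℓ σ i) :
    (τ ℓ : ℕ) ≤ (σ i : ℕ) ∧ (σ i : ℕ) ≤ n - k + (τ ℓ : ℕ) := by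
  classical
  obtain ⟨f, hf, hfl, hpat⟩ := h
  have hinj : Function.Injective (fun j : Fin k => σ (f j)) :=
    fun a b hab => hf.injective (σ.injective hab)
  constructor
  · have h1 : (Finset.univ.filter fun j : Fin k => τ j < τ ℓ).card = (τ ℓ : ℕ) := by
      rw [← Fin.card_Iio (τ ℓ)]
      apply Finset.card_bij (fun j _ => τ j)
      · intro a ha
        rw [Finset.mem_Iio]
        exact (Finset.mem_filter.1 ha).2
      · intro a _ b _ hab
        exact τ.injective hab
      · intro v hv
        exact ⟨τ.symm v, Finset.mem_filter.2 ⟨Finset.mem_univ _, by simpa using Finset.mem_Iio.1 hv⟩, by simp⟩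
    have h2 : (Finset.univ.filter fun j : Fin k => τ j < τ ℓ).card ≤ (Finset.Iio (σ i)).card := by
      apply Finset.card_le_card_of_injOn (fun j => σ (f j))
      · intro j hj
        rw [Finset.mem_coe, Finset.mem_Iio]
        rw [← hfl]
        exact (hpat j ℓ).2 (Finset.mem_filter.1 (Finset.mem_coe.1 hj)).2
      · exact fun a _ b _ hab => hinj hab
    rw [h1, Fin.card_Iio] at h2
    exact h2
  · have h1 : (Finset.univ.filter fun j : Fin k => τ ℓ < τ j).card = k - 1 - (τ ℓ : ℕ) := by
      rw [← Fin.card_Ioi (τ ℓ)]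
      apply Finset.card_bij (fun j _ => τ j)
      · intro a ha
        rw [Finset.mem_Ioi]
        exact (Finset.mem_filter.1 ha).2
      · intro a _ b _ hab
        exact τ.injective hab
      · intro v hv
        exact ⟨τ.symm v, Finset.mem_filter.2 ⟨Finset.mem_univ _, by simpa using Finset.mem_Ioi.1 hv⟩, by simp⟩
    have h2 : (Finset.univ.filter fun j : Fin k => τ ℓ < τ j).card ≤ (Finset.Ioi (σ i)).card := by
      apply Finset.card_le_card_of_injOn (fun j => σ (f j))
      · intro j hj
        rw [Finset.mem_coe, Finset.mem_Ioi]
        rw [← hfl]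
        exact (hpat ℓ j).2 (Finset.mem_filter.1 (Finset.mem_coe.1 hj)).2
      · exact fun a _ b _ hab => hinj hab
    rw [h1, Fin.card_Ioi] at h2
    have h3 := (σ i).isLt
    have h4 := (τ ℓ).isLt
    omega

lemma win_surj (hkn : k ≤ n) (τ : Equiv.Perm (Fin k)) (ℓ : Fin k) {σ : Equiv.Perm (Fin n)}
    (hall : ∀ i : Fin n, (ℓ : ℕ) ≤ (i : ℕ) → (i : ℕ) ≤ n - k + (ℓ : ℕ) → HasPMPMatch τ ℓ σ i) :
    ∀ v : Fin n, (τ ℓ : ℕ) ≤ (v : ℕ) → (v : ℕ) ≤ n - k + (τ ℓ : ℕ) →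
      ∃ i : Fin n, ((ℓ : ℕ) ≤ (i : ℕ) ∧ (i : ℕ) ≤ n - k + (ℓ : ℕ)) ∧ σ i = v := by
  classical
  have hrn : (τ ℓ : ℕ) < n := lt_of_lt_of_le (τ ℓ).isLt hkn
  have hrn2 : n - k + (τ ℓ : ℕ) < n := by have := (τ ℓ).isLt; omega
  set Mid : Finset (Fin n) := Finset.Icc ⟨(τ ℓ : ℕ), hrn⟩ ⟨n - k + (τ ℓ : ℕ), hrn2⟩ with hMid
  have hsub : (WF hkn ℓ).image σ ⊆ Mid := by
    intro v hv
    obtain ⟨i, hi, rfl⟩ := Finset.mem_image.1 hv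
    rw [mem_WF] at hi
    have h := middle_of_match hkn τ ℓ (hall i hi.1 hi.2)
    rw [hMid, Finset.mem_Icc, Fin.le_def, Fin.le_def]
    exact h
  have hcard : Mid.card ≤ ((WF hkn ℓ).image σ).card := by
    rw [Finset.card_image_of_injective _ σ.injective, card_WF, hMid, Fin.card_Icc]
    have := (τ ℓ).isLt
    simp
  have heq := Finset.eq_of_subset_of_card_le hsub hcard
  intro v h1 h2
  have hv : v ∈ Mid := by
    rw [hMid, Finset.mem_Icc, Fin.le_def, Fin.le_def]
    exact ⟨h1, h2⟩
  rw [← heq] at hv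
  obtain ⟨i, hi, hiv⟩ := Finset.mem_image.1 hv
  exact ⟨i, (mem_WF hkn ℓ).1 hi, hiv⟩

lemma frame_out (hkn : k ≤ n) (τ : Equiv.Perm (Fin k)) (ℓ : Fin k) {σ : Equiv.Perm (Fin n)}
    (hall : ∀ i : Fin n, (ℓ : ℕ) ≤ (i : ℕ) → (i : ℕ) ≤ n - k + (ℓ : ℕ) → HasPMPMatch τ ℓ σ i)
    {p : Fin n} (hp : ¬ ((ℓ : ℕ) ≤ (p : ℕ) ∧ (p : ℕ) ≤ n - k + (ℓ : ℕ))) :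
    (σ p : ℕ) < (τ ℓ : ℕ) ∨ n - k + (τ ℓ : ℕ) < (σ p : ℕ) := by
  by_contra hc
  push_neg at hc
  obtain ⟨i, hi, hiv⟩ := win_surj hkn τ ℓ hall (σ p) hc.1 hc.2
  have : i = p := σ.injective hiv
  rw [this] at hi
  exact hp hi

lemma small_iff (hkn : k ≤ n) (τ : Equiv.Perm (Fin k)) (ℓ : Fin k) {σ : Equiv.Perm (Fin n)}
    (hall : ∀ i : Fin n, (ℓ : ℕ) ≤ (i : ℕ) → (i : ℕ) ≤ n - k + (ℓ : ℕ) → HasPMPMatch τ ℓ σ i) :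
    ∀ j : Fin k, j ≠ ℓ → ((σ (posn hkn ℓ j) : ℕ) < (τ ℓ : ℕ) ↔ (τ j : ℕ) < (τ ℓ : ℕ)) := by
  intro j hj
  have hnev : (j : ℕ) ≠ (ℓ : ℕ) := fun h => hj (Fin.ext h)
  have hℓk := ℓ.isLt
  rcases hnev.lt_or_gt with hlt | hgt
  · -- j < ℓ : use the match at position ℓ
    have hm : HasPMPMatch τ ℓ σ ⟨(ℓ : ℕ), lowFin_lt hkn ℓ⟩ :=
      hall ⟨(ℓ : ℕ), lowFin_lt hkn ℓ⟩ (le_refl _) (by simp)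
    obtain ⟨f, hf, hfl, hpat⟩ := hm
    have hflv : (f ℓ : ℕ) = (ℓ : ℕ) := by rw [hfl]
    have hfix : ∀ j' : Fin k, (j' : ℕ) ≤ (ℓ : ℕ) → (f j' : ℕ) = (j' : ℕ) := by
      intro j' hj'
      have h1 := sm_le hf j'
      have h2 := smG hf ((ℓ : ℕ) - (j' : ℕ)) j' ℓ (by omega)
      omega
    have hfj : f j = posn hkn ℓ j :=
      Fin.ext (by rw [hfix j (le_of_lt hlt), posn_lt hkn ℓ j hlt])
    have hmid := middle_of_match hkn τ ℓ ⟨f, hf, hfl, hpat⟩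
    have hout := frame_out hkn τ ℓ hall (p := posn hkn ℓ j)
      (by rw [posn_lt hkn ℓ j hlt]; omega)
    have hp := hpat j ℓ
    rw [hfj, hfl] at hp
    rw [Fin.lt_def, Fin.lt_def] at hp
    constructor
    · intro h
      exact hp.1 (by omega)
    · intro h
      have := hp.2 h
      rcases hout with h' | h'
      · exact h'
      · omega
  · -- j > ℓ : use the match at position n - k + ℓ
    have hm : HasPMPMatch τ ℓ σ ⟨n - k + (ℓ : ℕ), hiFin_lt hkn ℓ⟩ :=
      hall ⟨n - k + (ℓ : ℕ), hiFin_lt hkn ℓ⟩ (by simp) (le_refl _)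
    obtain ⟨f, hf, hfl, hpat⟩ := hm
    have hflv : (f ℓ : ℕ) = n - k + (ℓ : ℕ) := by rw [hfl]
    have hfix : ∀ j' : Fin k, (ℓ : ℕ) ≤ (j' : ℕ) → (f j' : ℕ) = n - k + (j' : ℕ) := by
      intro j' hj'
      have h1 := sm_ub hkn hf j'
      have h2 := smG hf ((j' : ℕ) - (ℓ : ℕ)) ℓ j' (by omega)
      omega
    have hfj : f j = posn hkn ℓ j :=
      Fin.ext (by rw [hfix j (le_of_lt hgt), posn_ge hkn ℓ j (by omega)])
    have hmid := middle_of_match hkn τ ℓ ⟨f, hf, hfl, hpat⟩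
    have hout := frame_out hkn τ ℓ hall (p := posn hkn ℓ j)
      (by rw [posn_ge hkn ℓ j (by omega)]; have := j.isLt; omega)
    have hp := hpat j ℓ
    rw [hfj, hfl] at hp
    rw [Fin.lt_def, Fin.lt_def] at hp
    constructor
    · intro h
      exact hp.1 (by omega)
    · intro h
      have := hp.2 h
      rcases hout with h' | h'
      · exact h'
      · omega

lemma posPin (hkn : k ≤ n) (τ : Equiv.Perm (Fin k)) (ℓ : Fin k) {σ : Equiv.Perm (Fin n)}
    {i : Fin n} {f : Fin k → Fin n} (hf : StrictMono f) (hfl : f ℓ = i)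
    (hiW : (ℓ : ℕ) ≤ (i : ℕ) ∧ (i : ℕ) ≤ n - k + (ℓ : ℕ))
    (P : Fin k → Prop) [DecidablePred P]
    (hPne : ∀ p, P p → p ≠ ℓ)
    (hPout : ∀ p, P p → ¬ ((ℓ : ℕ) ≤ (f p : ℕ) ∧ (f p : ℕ) ≤ n - k + (ℓ : ℕ)))
    (hPcl : ∀ p, P p → ∀ q : Fin k, q ≠ ℓ → posn hkn ℓ q = f p → P q) :
    ∀ p, P p → f p = posn hkn ℓ p := by
  classical
  have hℓk := ℓ.isLt
  have hsideL : ∀ p, P p → (p : ℕ) < (ℓ : ℕ) → (f p : ℕ) < (ℓ : ℕ) := by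
    intro p hp hpl
    have h1 : f p < f ℓ := hf (by rw [Fin.lt_def]; omega)
    rw [hfl, Fin.lt_def] at h1
    have h2 := hPout p hp
    omega
  have hsideR : ∀ p, P p → (ℓ : ℕ) < (p : ℕ) → n - k + (ℓ : ℕ) < (f p : ℕ) := by
    intro p hp hpg
    have h1 : f ℓ < f p := hf (by rw [Fin.lt_def]; omega)
    rw [hfl, Fin.lt_def] at h1
    have h2 := hPout p hp
    omega
  have hleft : ∀ p, P p → (p : ℕ) < (ℓ : ℕ) → (f p : ℕ) = (p : ℕ) := by
    intro p hp hpl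
    set s : Finset ℕ :=
      (Finset.univ.filter fun q : Fin k => P q ∧ (q : ℕ) < (ℓ : ℕ)).image
        (fun q : Fin k => (q : ℕ)) with hs
    have hmem : ∀ x, x ∈ s ↔ ∃ q : Fin k, (P q ∧ (q : ℕ) < (ℓ : ℕ)) ∧ (q : ℕ) = x := by
      intro x; simp [hs]
    have key := uniqStrict s (fun x => if hx : x < k then (f ⟨x, hx⟩ : ℕ) else x)
      (by
        intro x hx
        obtain ⟨q, ⟨hq, hql⟩, rfl⟩ := (hmem x).1 hx
        simp only [dif_pos q.isLt]
        simp only [Fin.eta]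
        have hfql := hsideL q hq hql
        have hq1k : (f q : ℕ) < k := lt_trans hfql hℓk
        set q1 : Fin k := ⟨(f q : ℕ), hq1k⟩ with hq1
        have hq1ne : q1 ≠ ℓ := by
          intro h
          have : (q1 : ℕ) = (ℓ : ℕ) := by rw [h]
          simp [hq1] at this
          omega
        have hposq1 : posn hkn ℓ q1 = f q := Fin.ext (by rw [posn_lt hkn ℓ q1 (by simp [hq1]; omega)])
        have hPq1 : P q1 := hPcl q hq q1 hq1ne hposq1
        exact (hmem _).2 ⟨q1, ⟨hPq1, by simp [hq1]; omega⟩, rfl⟩)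
      (by
        intro x hx y hy hxy
        obtain ⟨q, ⟨hq, hql⟩, rfl⟩ := (hmem x).1 hx
        obtain ⟨q', ⟨hq', hql'⟩, rfl⟩ := (hmem y).1 hy
        simp only [dif_pos q.isLt, dif_pos q'.isLt]
        simp only [Fin.eta]
        have : f q < f q' := hf (by rw [Fin.lt_def]; omega)
        rw [Fin.lt_def] at this
        exact this)
      (p : ℕ) ((hmem _).2 ⟨p, ⟨hp, hpl⟩, rfl⟩)
    simp only [dif_pos p.isLt] at key
    simpa using key
  have hright : ∀ p, P p → (ℓ : ℕ) < (p : ℕ) → (f p : ℕ) = n - k + (p : ℕ) := by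
    intro p hp hpg
    set s : Finset ℕ :=
      (Finset.univ.filter fun q : Fin k => P q ∧ (ℓ : ℕ) < (q : ℕ)).image
        (fun q : Fin k => n - k + (q : ℕ)) with hs
    have hmem : ∀ x, x ∈ s ↔ ∃ q : Fin k, (P q ∧ (ℓ : ℕ) < (q : ℕ)) ∧ n - k + (q : ℕ) = x := by
      intro x; simp [hs]
    have key := uniqStrict s
      (fun x => if hx : n - k ≤ x ∧ x < n then (f ⟨x - (n - k), by omega⟩ : ℕ) else x)
      (by
        intro x hx
        obtain ⟨q, ⟨hq, hql⟩, rfl⟩ := (hmem x).1 hx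
        have hxx : n - k ≤ n - k + (q : ℕ) ∧ n - k + (q : ℕ) < n := by have := q.isLt; omega
        simp only [dif_pos hxx]
        simp only [show n - k + (q : ℕ) - (n - k) = (q : ℕ) from by omega, Fin.eta]
        have hfqg := hsideR q hq hql
        have hfqn := (f q).isLt
        set q1 : Fin k := ⟨(f q : ℕ) - (n - k), by omega⟩ with hq1
        have hq1v : (q1 : ℕ) = (f q : ℕ) - (n - k) := rfl
        have hq1g : (ℓ : ℕ) < (q1 : ℕ) := by omega
        have hq1ne : q1 ≠ ℓ := by
          intro h
          rw [h] at hq1g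
          omega
        have hposq1 : posn hkn ℓ q1 = f q :=
          Fin.ext (by rw [posn_ge hkn ℓ q1 (by omega)]; omega)
        have hPq1 : P q1 := hPcl q hq q1 hq1ne hposq1
        exact (hmem _).2 ⟨q1, ⟨hPq1, hq1g⟩, by omega⟩)
      (by
        intro x hx y hy hxy
        obtain ⟨q, ⟨hq, hql⟩, rfl⟩ := (hmem x).1 hx
        obtain ⟨q', ⟨hq', hql'⟩, rfl⟩ := (hmem y).1 hy
        have hxx : n - k ≤ n - k + (q : ℕ) ∧ n - k + (q : ℕ) < n := by have := q.isLt; omega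
        have hyy : n - k ≤ n - k + (q' : ℕ) ∧ n - k + (q' : ℕ) < n := by have := q'.isLt; omega
        simp only [dif_pos hxx, dif_pos hyy]
        simp only [show n - k + (q : ℕ) - (n - k) = (q : ℕ) from by omega,
          show n - k + (q' : ℕ) - (n - k) = (q' : ℕ) from by omega, Fin.eta]
        have : f q < f q' := hf (by rw [Fin.lt_def]; omega)
        rw [Fin.lt_def] at this
        exact this)
      (n - k + (p : ℕ)) ((hmem _).2 ⟨p, ⟨hp, hpg⟩, rfl⟩)
    have hxx : n - k ≤ n - k + (p : ℕ) ∧ n - k + (p : ℕ) < n := by have := p.isLt; omega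
    simp only [dif_pos hxx] at key
    simp only [show n - k + (p : ℕ) - (n - k) = (p : ℕ) from by omega, Fin.eta] at key
    exact key
  intro p hp
  have hne := hPne p hp
  have hnev : (p : ℕ) ≠ (ℓ : ℕ) := fun h => hne (Fin.ext h)
  rcases hnev.lt_or_gt with h | h
  · exact Fin.ext (by rw [hleft p hp h, posn_lt hkn ℓ p h])
  · exact Fin.ext (by rw [hright p hp h, posn_ge hkn ℓ p (by omega)])

lemma posn_out (hkn : k ≤ n) (ℓ : Fin k) (q : Fin k) (hq : q ≠ ℓ) :
    ¬ ((ℓ : ℕ) ≤ (posn hkn ℓ q : ℕ) ∧ (posn hkn ℓ q : ℕ) ≤ n - k + (ℓ : ℕ)) := by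
  have hv : (q : ℕ) ≠ (ℓ : ℕ) := fun h => hq (Fin.ext h)
  rcases hv.lt_or_gt with h | h
  · rw [posn_lt hkn ℓ q h]; omega
  · rw [posn_ge hkn ℓ q (by omega)]; have := q.isLt; omega

lemma frameOK_of_max (hkn : k ≤ n) (τ : Equiv.Perm (Fin k)) (ℓ : Fin k) {σ : Equiv.Perm (Fin n)}
    (hall : ∀ i : Fin n, (ℓ : ℕ) ≤ (i : ℕ) → (i : ℕ) ≤ n - k + (ℓ : ℕ) → HasPMPMatch τ ℓ σ i) :
    FrameOK hkn τ ℓ σ := by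
  classical
  intro j hj
  have hr := (τ ℓ).isLt
  have hτj : (τ j : ℕ) ≠ (τ ℓ : ℕ) := fun h => hj (τ.injective (Fin.ext h))
  rcases hτj.lt_or_gt with hsmall | hlarge
  · -- small case : match at the position of the value τ ℓ
    obtain ⟨i, hiW, hiv⟩ := win_surj hkn τ ℓ hall ⟨(τ ℓ : ℕ), lt_of_lt_of_le hr hkn⟩
      (le_refl _) (by simp)
    obtain ⟨f, hf, hfl, hpat⟩ := hall i hiW.1 hiW.2
    have hσi : (σ i : ℕ) = (τ ℓ : ℕ) := by rw [hiv]
    have hpin : ∀ p, (τ p : ℕ) < (τ ℓ : ℕ) → f p = posn hkn ℓ p := by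
      apply posPin (σ := σ) hkn τ ℓ hf hfl hiW (fun p => (τ p : ℕ) < (τ ℓ : ℕ))
      · intro p hp h
        rw [h] at hp; omega
      · intro p hp hw
        have h1 : σ (f p) < σ i := by
          rw [← hfl]; exact (hpat p ℓ).2 (by rw [Fin.lt_def]; exact hp)
        have h2 := middle_of_match hkn τ ℓ (hall (f p) hw.1 hw.2)
        rw [Fin.lt_def, hσi] at h1
        omega
      · intro p hp q hqne hq
        have h1 : σ (f p) < σ i := by
          rw [← hfl]; exact (hpat p ℓ).2 (by rw [Fin.lt_def]; exact hp)
        rw [Fin.lt_def, hσi] at h1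
        rw [← hq] at h1
        exact (small_iff hkn τ ℓ hall q hqne).1 h1
    -- value pinning
    set s : Finset ℕ :=
      (Finset.univ.filter fun v : Fin k => (v : ℕ) < (τ ℓ : ℕ)).image
        (fun v : Fin k => (v : ℕ)) with hs
    have hmem : ∀ x, x ∈ s ↔ ∃ v : Fin k, (v : ℕ) < (τ ℓ : ℕ) ∧ (v : ℕ) = x := by
      intro x; simp [hs]
    have hmaps : ∀ (v : Fin k), (v : ℕ) < (τ ℓ : ℕ) →
        (σ (posn hkn ℓ (τ.symm v)) : ℕ) < (τ ℓ : ℕ) := by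
      intro v hv
      have hne : τ.symm v ≠ ℓ := by
        intro h
        have : τ (τ.symm v) = τ ℓ := by rw [h]
        rw [Equiv.apply_symm_apply] at this
        rw [this] at hv; omega
      apply (small_iff hkn τ ℓ hall (τ.symm v) hne).2
      rw [Equiv.apply_symm_apply]
      exact hv
    have key := uniqStrict s
      (fun x => if hx : x < k then (σ (posn hkn ℓ (τ.symm ⟨x, hx⟩)) : ℕ) else x)
      (by
        intro x hx
        obtain ⟨v, hv, rfl⟩ := (hmem x).1 hx
        simp only [dif_pos v.isLt, Fin.eta]
        have h1 := hmaps v hv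
        exact (hmem _).2 ⟨⟨(σ (posn hkn ℓ (τ.symm v)) : ℕ), lt_trans h1 hr⟩, h1, rfl⟩)
      (by
        intro x hx y hy hxy
        obtain ⟨v, hv, rfl⟩ := (hmem x).1 hx
        obtain ⟨v', hv', rfl⟩ := (hmem y).1 hy
        simp only [dif_pos v.isLt, dif_pos v'.isLt, Fin.eta]
        have hj1 : (τ (τ.symm v) : ℕ) < (τ ℓ : ℕ) := by rw [Equiv.apply_symm_apply]; exact hv
        have hj2 : (τ (τ.symm v') : ℕ) < (τ ℓ : ℕ) := by rw [Equiv.apply_symm_apply]; exact hv'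
        have hlt : σ (f (τ.symm v)) < σ (f (τ.symm v')) := by
          apply (hpat _ _).2
          rw [Fin.lt_def, Equiv.apply_symm_apply, Equiv.apply_symm_apply]
          exact hxy
        rw [hpin _ hj1, hpin _ hj2] at hlt
        rw [Fin.lt_def] at hlt
        exact hlt)
      (τ j : ℕ) ((hmem _).2 ⟨τ j, hsmall, rfl⟩)
    simp only [dif_pos (τ j).isLt, Fin.eta, Equiv.symm_apply_apply] at key
    apply Fin.ext
    rw [key]
    simp [gval, hsmall]
  · -- large case : match at the position of the value n - k + τ ℓ
    obtain ⟨i, hiW, hiv⟩ := win_surj hkn τ ℓ hall ⟨n - k + (τ ℓ : ℕ), by omega⟩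
      (by simp) (le_refl _)
    obtain ⟨f, hf, hfl, hpat⟩ := hall i hiW.1 hiW.2
    have hσi : (σ i : ℕ) = n - k + (τ ℓ : ℕ) := by rw [hiv]
    have hpin : ∀ p, (τ ℓ : ℕ) < (τ p : ℕ) → f p = posn hkn ℓ p := by
      apply posPin (σ := σ) hkn τ ℓ hf hfl hiW (fun p => (τ ℓ : ℕ) < (τ p : ℕ))
      · intro p hp h
        rw [h] at hp; omega
      · intro p hp hw
        have h1 : σ i < σ (f p) := by
          rw [← hfl]; exact (hpat ℓ p).2 (by rw [Fin.lt_def]; exact hp)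
        have h2 := middle_of_match hkn τ ℓ (hall (f p) hw.1 hw.2)
        rw [Fin.lt_def, hσi] at h1
        omega
      · intro p hp q hqne hq
        have h1 : σ i < σ (f p) := by
          rw [← hfl]; exact (hpat ℓ p).2 (by rw [Fin.lt_def]; exact hp)
        rw [Fin.lt_def, hσi] at h1
        rw [← hq] at h1
        have h2 := (small_iff hkn τ ℓ hall q hqne)
        have h3 : (τ q : ℕ) ≠ (τ ℓ : ℕ) := fun h => hqne (τ.injective (Fin.ext h))
        omega
    -- value pinning (large values)
    set s : Finset ℕ :=
      (Finset.univ.filter fun v : Fin k => (τ ℓ : ℕ) < (v : ℕ)).image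
        (fun v : Fin k => n - k + (v : ℕ)) with hs
    have hmem : ∀ x, x ∈ s ↔ ∃ v : Fin k, (τ ℓ : ℕ) < (v : ℕ) ∧ n - k + (v : ℕ) = x := by
      intro x; simp [hs]
    have hmaps : ∀ (v : Fin k), (τ ℓ : ℕ) < (v : ℕ) →
        n - k + (τ ℓ : ℕ) < (σ (posn hkn ℓ (τ.symm v)) : ℕ) := by
      intro v hv
      have hne : τ.symm v ≠ ℓ := by
        intro h
        have : τ (τ.symm v) = τ ℓ := by rw [h]
        rw [Equiv.apply_symm_apply] at this
        rw [this] at hv; omega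
      have h2 := small_iff hkn τ ℓ hall (τ.symm v) hne
      have h3 : ¬ ((τ (τ.symm v)) : ℕ) < (τ ℓ : ℕ) := by
        rw [Equiv.apply_symm_apply]; omega
      have h4 := frame_out hkn τ ℓ hall (posn_out hkn ℓ (τ.symm v) hne)
      omega
    have key := uniqStrict s
      (fun x => if hx : n - k ≤ x ∧ x < n then
        (σ (posn hkn ℓ (τ.symm ⟨x - (n - k), by omega⟩)) : ℕ) else x)
      (by
        intro x hx
        obtain ⟨v, hv, rfl⟩ := (hmem x).1 hx
        have hxx : n - k ≤ n - k + (v : ℕ) ∧ n - k + (v : ℕ) < n := by have := v.isLt; omega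
        simp only [dif_pos hxx, show n - k + (v : ℕ) - (n - k) = (v : ℕ) from by omega, Fin.eta]
        have h1 := hmaps v hv
        have h2 := (σ (posn hkn ℓ (τ.symm v))).isLt
        exact (hmem _).2 ⟨⟨(σ (posn hkn ℓ (τ.symm v)) : ℕ) - (n - k), by omega⟩, by simp; omega,
          by simp; omega⟩)
      (by
        intro x hx y hy hxy
        obtain ⟨v, hv, rfl⟩ := (hmem x).1 hx
        obtain ⟨v', hv', rfl⟩ := (hmem y).1 hy
        have hxx : n - k ≤ n - k + (v : ℕ) ∧ n - k + (v : ℕ) < n := by have := v.isLt; omega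
        have hyy : n - k ≤ n - k + (v' : ℕ) ∧ n - k + (v' : ℕ) < n := by have := v'.isLt; omega
        simp only [dif_pos hxx, dif_pos hyy,
          show n - k + (v : ℕ) - (n - k) = (v : ℕ) from by omega,
          show n - k + (v' : ℕ) - (n - k) = (v' : ℕ) from by omega, Fin.eta]
        have hj1 : (τ ℓ : ℕ) < (τ (τ.symm v) : ℕ) := by rw [Equiv.apply_symm_apply]; exact hv
        have hj2 : (τ ℓ : ℕ) < (τ (τ.symm v') : ℕ) := by rw [Equiv.apply_symm_apply]; exact hv'
        have hlt : σ (f (τ.symm v)) < σ (f (τ.symm v')) := by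
          apply (hpat _ _).2
          rw [Fin.lt_def, Equiv.apply_symm_apply, Equiv.apply_symm_apply]
          omega
        rw [hpin _ hj1, hpin _ hj2] at hlt
        rw [Fin.lt_def] at hlt
        exact hlt)
      (n - k + (τ j : ℕ)) ((hmem _).2 ⟨τ j, hlarge, rfl⟩)
    have hxx : n - k ≤ n - k + (τ j : ℕ) ∧ n - k + (τ j : ℕ) < n := by
      have := (τ j).isLt; omega
    simp only [dif_pos hxx, show n - k + (τ j : ℕ) - (n - k) = (τ j : ℕ) from by omega,
      Fin.eta, Equiv.symm_apply_apply] at key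
    apply Fin.ext
    rw [key]
    have hns : ¬ (τ j : ℕ) < (τ ℓ : ℕ) := by omega
    simp [gval, hns]

lemma gval_val (hkn : k ≤ n) (τ : Equiv.Perm (Fin k)) (ℓ : Fin k) (j : Fin k) :
    (gval hkn τ ℓ j : ℕ) =
      if (τ j : ℕ) < (τ ℓ : ℕ) then (τ j : ℕ) else n - k + (τ j : ℕ) := by
  rw [gval]; split <;> rfl

lemma middle_of_frame (hkn : k ≤ n) (τ : Equiv.Perm (Fin k)) (ℓ : Fin k) {σ : Equiv.Perm (Fin n)}
    (hFr : FrameOK hkn τ ℓ σ) {i : Fin n} (h1 : (ℓ : ℕ) ≤ (i : ℕ)) (h2 : (i : ℕ) ≤ n - k + (ℓ : ℕ)) :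
    (τ ℓ : ℕ) ≤ (σ i : ℕ) ∧ (σ i : ℕ) ≤ n - k + (τ ℓ : ℕ) := by
  by_contra hc
  have hr := (τ ℓ).isLt
  have hin := (σ i).isLt
  have hv : (σ i : ℕ) < (τ ℓ : ℕ) ∨ n - k + (τ ℓ : ℕ) < (σ i : ℕ) := by omega
  have main : ∃ j : Fin k, j ≠ ℓ ∧ (gval hkn τ ℓ j : ℕ) = (σ i : ℕ) := by
    rcases hv with h | h
    · refine ⟨τ.symm ⟨(σ i : ℕ), lt_trans h hr⟩, ?_, ?_⟩
      · intro hh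
        have : τ (τ.symm ⟨(σ i : ℕ), lt_trans h hr⟩) = τ ℓ := by rw [hh]
        rw [Equiv.apply_symm_apply] at this
        have := congrArg Fin.val this
        simp at this
        omega
      · rw [gval_val, Equiv.apply_symm_apply]
        simp
        omega
    · have hk1 : (σ i : ℕ) - (n - k) < k := by omega
      refine ⟨τ.symm ⟨(σ i : ℕ) - (n - k), hk1⟩, ?_, ?_⟩
      · intro hh
        have : τ (τ.symm ⟨(σ i : ℕ) - (n - k), hk1⟩) = τ ℓ := by rw [hh]
        rw [Equiv.apply_symm_apply] at this
        have := congrArg Fin.val this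
        simp at this
        omega
      · rw [gval_val, Equiv.apply_symm_apply]
        simp
        rw [if_neg (by omega)]
        omega
  obtain ⟨j, hj, hgv⟩ := main
  have h3 : σ (posn hkn ℓ j) = σ i := by
    rw [hFr j hj]
    exact Fin.ext hgv
  have h4 : posn hkn ℓ j = i := σ.injective h3
  have h5 := posn_out hkn ℓ j hj
  rw [h4] at h5
  exact h5 ⟨h1, h2⟩

lemma max_of_frameOK (hkn : k ≤ n) (τ : Equiv.Perm (Fin k)) (ℓ : Fin k) {σ : Equiv.Perm (Fin n)}
    (hFr : FrameOK hkn τ ℓ σ) :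
    ∀ i : Fin n, (ℓ : ℕ) ≤ (i : ℕ) → (i : ℕ) ≤ n - k + (ℓ : ℕ) → HasPMPMatch τ ℓ σ i := by
  intro i h1 h2
  have hℓk := ℓ.isLt
  set f : Fin k → Fin n := fun j => if j = ℓ then i else posn hkn ℓ j with hfdef
  have fval : ∀ j : Fin k, (f j : ℕ) =
      if (j : ℕ) < (ℓ : ℕ) then (j : ℕ)
      else if (j : ℕ) = (ℓ : ℕ) then (i : ℕ) else n - k + (j : ℕ) := by
    intro j
    by_cases hj : j = ℓ
    · subst hj
      simp [hfdef]
    · have hjv : (j : ℕ) ≠ (ℓ : ℕ) := fun h => hj (Fin.ext h)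
      rw [hfdef]
      simp only [if_neg hj]
      rcases hjv.lt_or_gt with h | h
      · rw [posn_lt hkn ℓ j h, if_pos h]
      · rw [posn_ge hkn ℓ j (by omega), if_neg (by omega), if_neg (by omega)]
  have hmono : StrictMono f := by
    intro a b hab
    rw [Fin.lt_def] at hab ⊢
    rw [fval a, fval b]
    have := a.isLt
    have := b.isLt
    split_ifs <;> omega
  have hfl : f ℓ = i := by simp [hfdef]
  have hmid := middle_of_frame hkn τ ℓ hFr h1 h2
  have key : ∀ a b : Fin k, τ a < τ b → σ (f a) < σ (f b) := by
    intro a b hab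
    rw [Fin.lt_def] at hab
    rw [Fin.lt_def]
    have hrk := (τ ℓ).isLt
    have hak := (τ a).isLt
    have hbk := (τ b).isLt
    by_cases ha : a = ℓ <;> by_cases hb : b = ℓ
    · exfalso; rw [ha, hb] at hab; exact lt_irrefl _ hab
    · have hfb : f b = posn hkn ℓ b := by rw [hfdef]; simp [hb]
      have hab' : (τ ℓ : ℕ) < (τ b : ℕ) := by rw [← ha]; exact hab
      rw [ha, hfl, hfb, hFr b hb, gval_val, if_neg (by omega)]
      omega
    · have hfa : f a = posn hkn ℓ a := by rw [hfdef]; simp [ha]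
      have hab' : (τ a : ℕ) < (τ ℓ : ℕ) := by rw [← hb]; exact hab
      rw [hb, hfl, hfa, hFr a ha, gval_val, if_pos (by omega)]
      omega
    · have hfa : f a = posn hkn ℓ a := by rw [hfdef]; simp [ha]
      have hfb : f b = posn hkn ℓ b := by rw [hfdef]; simp [hb]
      rw [hfa, hfb, hFr a ha, hFr b hb, gval_val, gval_val]
      split_ifs <;> omega
  refine ⟨f, hmono, hfl, ?_⟩
  intro a b
  constructor
  · intro hlt
    rcases lt_trichotomy (τ a) (τ b) with h | h | h
    · exact h
    · exfalso
      have : a = b := τ.injective h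
      subst this
      exact lt_irrefl _ hlt
    · exact absurd hlt (lt_asymm (key b a h))
  · exact key a b

lemma gval_inj (hkn : k ≤ n) (τ : Equiv.Perm (Fin k)) (ℓ : Fin k) :
    Function.Injective (gval hkn τ ℓ) := by
  intro x y hxy
  have h := congrArg Fin.val hxy
  rw [gval_val, gval_val] at h
  have hx := (τ x).isLt
  have hy := (τ y).isLt
  have hv : (τ x : ℕ) = (τ y : ℕ) := by split_ifs at h <;> omega
  exact τ.injective (Fin.ext hv)

lemma gval_out (hkn : k ≤ n) (τ : Equiv.Perm (Fin k)) (ℓ : Fin k) (j : Fin k) (hj : j ≠ ℓ) :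
    (gval hkn τ ℓ j : ℕ) < (τ ℓ : ℕ) ∨ n - k + (τ ℓ : ℕ) < (gval hkn τ ℓ j : ℕ) := by
  have hne : (τ j : ℕ) ≠ (τ ℓ : ℕ) := fun h => hj (τ.injective (Fin.ext h))
  have := (τ j).isLt
  have := (τ ℓ).isLt
  rw [gval_val]
  split_ifs <;> omega

/-- The canonical maximal permutation (as a function). -/
def s0fun (hkn : k ≤ n) (τ : Equiv.Perm (Fin k)) (ℓ : Fin k) : Fin n → Fin n := fun i =>
  if h1 : (i : ℕ) < (ℓ : ℕ) then gval hkn τ ℓ ⟨(i : ℕ), lt_trans h1 ℓ.isLt⟩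
  else if h2 : (i : ℕ) ≤ n - k + (ℓ : ℕ) then
    ⟨(τ ℓ : ℕ) + ((i : ℕ) - (ℓ : ℕ)), by have := (τ ℓ).isLt; have := ℓ.isLt; omega⟩
  else gval hkn τ ℓ ⟨(i : ℕ) - (n - k), by have := i.isLt; omega⟩

lemma s0inj (hkn : k ≤ n) (τ : Equiv.Perm (Fin k)) (ℓ : Fin k) :
    Function.Injective (s0fun hkn τ ℓ) := by
  intro a b hab
  have hak := a.isLt
  have hbk := b.isLt
  have hℓ := ℓ.isLt
  have hτℓ := (τ ℓ).isLt
  apply Fin.ext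
  simp only [s0fun] at hab
  split_ifs at hab with h1 h2 h3 h4 h5 h6 h7 h8
  · have := congrArg Fin.val (gval_inj hkn τ ℓ hab)
    simpa using this
  · have h := congrArg Fin.val hab
    have hout := gval_out hkn τ ℓ ⟨(a : ℕ), by omega⟩ (Fin.ne_of_val_ne (by simp; omega))
    simp at h
    omega
  · have := congrArg Fin.val (gval_inj hkn τ ℓ hab)
    simp at this
    omega
  · have h := congrArg Fin.val hab
    have hout := gval_out hkn τ ℓ ⟨(b : ℕ), by omega⟩ (Fin.ne_of_val_ne (by simp; omega))
    simp at h
    omega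
  · have h := congrArg Fin.val hab
    simp at h
    omega
  · have h := congrArg Fin.val hab
    have hout := gval_out hkn τ ℓ ⟨(b : ℕ) - (n - k), by omega⟩ (Fin.ne_of_val_ne (by simp; omega))
    simp at h
    omega
  · have := congrArg Fin.val (gval_inj hkn τ ℓ hab)
    simp at this
    omega
  · have h := congrArg Fin.val hab
    have hout := gval_out hkn τ ℓ ⟨(a : ℕ) - (n - k), by omega⟩ (Fin.ne_of_val_ne (by simp; omega))
    simp at h
    omega
  · have := congrArg Fin.val (gval_inj hkn τ ℓ hab)
    simp at this
    omega

/-- The canonical maximal permutation. -/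
noncomputable def sigma0 (hkn : k ≤ n) (τ : Equiv.Perm (Fin k)) (ℓ : Fin k) :
    Equiv.Perm (Fin n) :=
  Equiv.ofBijective _ (Finite.injective_iff_bijective.mp (s0inj hkn τ ℓ))

lemma sigma0_apply (hkn : k ≤ n) (τ : Equiv.Perm (Fin k)) (ℓ : Fin k) (i : Fin n) :
    sigma0 hkn τ ℓ i = s0fun hkn τ ℓ i := rfl

lemma sigma0_frame (hkn : k ≤ n) (τ : Equiv.Perm (Fin k)) (ℓ : Fin k) :
    FrameOK hkn τ ℓ (sigma0 hkn τ ℓ) := by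
  intro j hj
  have hjv : (j : ℕ) ≠ (ℓ : ℕ) := fun h => hj (Fin.ext h)
  have hjk := j.isLt
  have hℓk := ℓ.isLt
  rcases hjv.lt_or_gt with h | h
  · have h1 : (posn hkn ℓ j : ℕ) < (ℓ : ℕ) := by rw [posn_lt hkn ℓ j h]; exact h
    rw [sigma0_apply]
    simp only [s0fun]
    rw [dif_pos h1]
    congr 1
    apply Fin.ext
    simp [posn_lt hkn ℓ j h]
  · have hpv : (posn hkn ℓ j : ℕ) = n - k + (j : ℕ) := posn_ge hkn ℓ j (by omega)
    have h0 : ¬ (posn hkn ℓ j : ℕ) < (ℓ : ℕ) := by rw [hpv]; omega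
    have h2 : ¬ (posn hkn ℓ j : ℕ) ≤ n - k + (ℓ : ℕ) := by rw [hpv]; omega
    rw [sigma0_apply]
    simp only [s0fun]
    rw [dif_neg h0, dif_neg h2]
    congr 1
    apply Fin.ext
    simp [hpv]

lemma posn_cover (hkn : k ≤ n) (ℓ : Fin k) (x : Fin n)
    (hx : ¬ ((ℓ : ℕ) ≤ (x : ℕ) ∧ (x : ℕ) ≤ n - k + (ℓ : ℕ))) :
    ∃ j : Fin k, j ≠ ℓ ∧ posn hkn ℓ j = x := by
  have hxn := x.isLt
  have hℓk := ℓ.isLt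
  rcases lt_or_ge (x : ℕ) (ℓ : ℕ) with h | h
  · refine ⟨⟨(x : ℕ), by omega⟩, Fin.ne_of_val_ne (by simp; omega), ?_⟩
    apply Fin.ext
    rw [posn_lt hkn ℓ _ (by simpa using h)]
  · have hgt : n - k + (ℓ : ℕ) < (x : ℕ) := by omega
    refine ⟨⟨(x : ℕ) - (n - k), by omega⟩, Fin.ne_of_val_ne (by simp; omega), ?_⟩
    apply Fin.ext
    rw [posn_ge hkn ℓ _ (by simp; omega)]
    simp
    omega

end Main
end PMPaux

theorem stmt3 (n k : ℕ) (hkn : k ≤ n) (τ : Equiv.Perm (Fin k)) (ℓ : Fin k) :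
    Nat.card {σ : Equiv.Perm (Fin n) // pmpCount τ ℓ σ = n - k + 1} =
      Nat.factorial (n - k + 1) := by
  classical
  have key : ∀ σ : Equiv.Perm (Fin n),
      pmpCount τ ℓ σ = n - k + 1 ↔ PMPaux.FrameOK hkn τ ℓ σ := by
    intro σ
    constructor
    · intro h
      exact PMPaux.frameOK_of_max hkn τ ℓ ((PMPaux.pmp_eq_iff hkn τ ℓ σ).1 h)
    · intro h
      exact (PMPaux.pmp_eq_iff hkn τ ℓ σ).2 (PMPaux.max_of_frameOK hkn τ ℓ h)
  rw [Nat.card_congr (Equiv.subtypeEquivRight key)]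
  set σ₀ := PMPaux.sigma0 hkn τ ℓ with hσ₀
  set p : Fin n → Prop := fun x => (ℓ : ℕ) ≤ (x : ℕ) ∧ (x : ℕ) ≤ n - k + (ℓ : ℕ) with hp
  have E1 : {σ : Equiv.Perm (Fin n) // PMPaux.FrameOK hkn τ ℓ σ} ≃
      {π : Equiv.Perm (Fin n) // ∀ x : Fin n, ¬ p x → π x = x} := by
    refine ⟨fun σ => ⟨σ₀⁻¹ * σ.1, ?_⟩, fun π => ⟨σ₀ * π.1, ?_⟩, ?_, ?_⟩
    · intro x hx
      obtain ⟨j, hjne, hpj⟩ := PMPaux.posn_cover hkn ℓ x hx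
      have h1 : σ.1 x = σ₀ x := by
        rw [← hpj, σ.2 j hjne, hσ₀, PMPaux.sigma0_frame hkn τ ℓ j hjne]
      simp [Equiv.Perm.mul_apply, h1]
    · intro j hjne
      have hout := PMPaux.posn_out hkn ℓ j hjne
      have h1 : π.1 (PMPaux.posn hkn ℓ j) = PMPaux.posn hkn ℓ j := π.2 _ hout
      simp [Equiv.Perm.mul_apply, h1]
      exact PMPaux.sigma0_frame hkn τ ℓ j hjne
    · intro σ
      exact Subtype.ext (mul_inv_cancel_left σ₀ σ.1)
    · intro π
      exact Subtype.ext (inv_mul_cancel_left σ₀ π.1)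
  rw [Nat.card_congr E1]
  rw [Nat.card_congr (Equiv.Perm.subtypeEquivSubtypePerm p).symm]
  rw [Nat.card_eq_fintype_card, Fintype.card_perm]
  congr 1
  rw [Fintype.card_subtype]
  have hfil : Finset.univ.filter p = PMPaux.WF hkn ℓ := by
    ext i
    rw [Finset.mem_filter, PMPaux.mem_WF]
    simp [hp]
  rw [hfil, PMPaux.card_WF]


-- sanity check
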